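/- For m > 1 let F_m(ρ) = ∫_Ω D ρ + (1/m)∫_Ω ρ^m and F(ρ) = ∫_Ω D ρ if ρ ≤ 1 a.e., +∞ otherwise, both defined on probability densities on Ω. Then for every fixed ρ, liminf_{m→∞} F_m(ρ) ≥ F(ρ), and lim_{m→∞} F_m(ρ) = F(ρ) whenever ρ ∈ L^∞. -/

import Mathlib

open MeasureTheory Filter
open scoped ENNReal

section Aux

lemma ereal_coe_ennreal_eq_toReal {x : ℝ≥0∞} (hx : x ≠ ⊤) :
    (x : EReal) = ((x.toReal : ℝ) : EReal) := by
  have h := EReal.coe_ennreal_ofReal (x := x.toReal)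
  rw [ENNReal.ofReal_toReal hx] at h
  rw [h, max_eq_left ENNReal.toReal_nonneg]

lemma inv_mul_pow_tendsto_atTop {b : ℝ} (hb : 1 < b) :
    Tendsto (fun m : ℕ => ((m : ℝ))⁻¹ * b ^ m) atTop atTop := by
  have hL : 0 < Real.log b := Real.log_pos hb
  have h1 : Tendsto (fun m : ℕ => (m : ℝ) * Real.log b) atTop atTop :=
    (tendsto_natCast_atTop_atTop).atTop_mul_const hL
  have h2 : Tendsto (fun x : ℝ => Real.exp x / x) atTop atTop := by
    simpa using Real.tendsto_exp_div_pow_atTop 1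
  have h3 : Tendsto (fun m : ℕ => Real.exp ((m : ℝ) * Real.log b) / ((m : ℝ) * Real.log b))
      atTop atTop := h2.comp h1
  have h4 := h3.atTop_mul_const hL
  refine h4.congr' ?_
  filter_upwards [eventually_ge_atTop 1] with m hm
  have hm0 : (m : ℝ) ≠ 0 := by positivity
  have hexp : Real.exp ((m : ℝ) * Real.log b) = b ^ m := by
    rw [Real.exp_nat_mul, Real.exp_log (by linarith)]
  rw [hexp]
  field_simp

end Aux

/-- Pointwise part of the Γ-convergence `F_m → F`: with
`F_m(ρ) = ∫ D ρ + (1/m)∫ ρ^m` and `F(ρ) = ∫ D ρ` if `ρ ≤ 1` a.e. (`+∞` otherwise),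
one has `F(ρ) ≤ liminf_m F_m(ρ)`, and `F_m(ρ) → F(ρ)` whenever `ρ ∈ L^∞`. -/
theorem stmt17 {d : ℕ} (Ω : Set (EuclideanSpace ℝ (Fin d)))
    (hΩmeas : MeasurableSet Ω) (hΩbdd : Bornology.IsBounded Ω) (hΩfin : volume Ω < ⊤)
    (D : EuclideanSpace ℝ (Fin d) → ℝ) (hDcont : Continuous D)
    (CD : ℝ) (hDbdd : ∀ x, |D x| ≤ CD)
    (ρ : EuclideanSpace ℝ (Fin d) → ℝ) (hρmeas : Measurable ρ)
    (hρnonneg : ∀ x, 0 ≤ ρ x) (hρint : IntegrableOn ρ Ω)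
    (hρmass : ∫ x in Ω, ρ x = 1)
    (Fm : ℕ → EReal)
    (hFm : Fm = fun (m : ℕ) => ((∫ x in Ω, D x * ρ x : ℝ) : EReal) +
      (((m : ℝ)⁻¹ : ℝ) : EReal) *
        ((∫⁻ x in Ω, (ENNReal.ofReal (ρ x)) ^ m : ℝ≥0∞) : EReal))
    (F : EReal)
    (hF : ((∀ᵐ x ∂(volume.restrict Ω), ρ x ≤ 1) →
            F = ((∫ x in Ω, D x * ρ x : ℝ) : EReal)) ∧
          (¬ (∀ᵐ x ∂(volume.restrict Ω), ρ x ≤ 1) → F = ⊤)) :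
    F ≤ atTop.liminf Fm ∧
    ((∃ C : ℝ, ∀ᵐ x ∂(volume.restrict Ω), ρ x ≤ C) → Tendsto Fm atTop (nhds F)) := by
  set A : ℝ := ∫ x in Ω, D x * ρ x with hA
  set L : ℕ → ℝ≥0∞ := fun m => ∫⁻ x in Ω, (ENNReal.ofReal (ρ x)) ^ m with hL
  have key : Tendsto Fm atTop (nhds F) := by
    by_cases hae : ∀ᵐ x ∂(volume.restrict Ω), ρ x ≤ 1
    · -- bounded case: L m ≤ volume Ω, second term → 0
      rw [hF.1 hae, hFm]
      have hLle : ∀ m, L m ≤ volume Ω := by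
        intro m
        have : ∀ᵐ x ∂(volume.restrict Ω), (ENNReal.ofReal (ρ x)) ^ m ≤ 1 := by
          filter_upwards [hae] with x hx
          exact pow_le_one' (by simpa using ENNReal.ofReal_le_one.2 hx) m
        calc L m ≤ ∫⁻ _ in Ω, 1 := lintegral_mono_ae this
        _ = volume Ω := by simp
      have hLne : ∀ m, L m ≠ ⊤ := fun m => ((hLle m).trans_lt hΩfin).ne
      have heq : ∀ m : ℕ, ((A : EReal) + (((m : ℝ)⁻¹ : ℝ) : EReal) * ((L m : ℝ≥0∞) : EReal))
          = (((A + (m : ℝ)⁻¹ * (L m).toReal : ℝ)) : EReal) := by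
        intro m
        rw [ereal_coe_ennreal_eq_toReal (hLne m), ← EReal.coe_mul, ← EReal.coe_add]
      show Tendsto (fun m : ℕ => ((A : EReal) + (((m : ℝ)⁻¹ : ℝ) : EReal) * ((L m : ℝ≥0∞) : EReal))) atTop _
      simp only [heq]
      rw [EReal.tendsto_coe]
      have hto0 : Tendsto (fun m : ℕ => (m : ℝ)⁻¹ * (L m).toReal) atTop (nhds 0) := by
        have hb : Tendsto (fun m : ℕ => (m : ℝ)⁻¹ * (volume Ω).toReal) atTop (nhds 0) := by
          simpa using tendsto_inv_atTop_nhds_zero_nat.mul_const (volume Ω).toReal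
        refine squeeze_zero (fun m => by positivity) (fun m => ?_) hb
        exact mul_le_mul_of_nonneg_left (ENNReal.toReal_mono hΩfin.ne (hLle m))
          (by positivity)
      simpa using tendsto_const_nhds.add hto0
    · -- unbounded case: Fm → ⊤
      rw [hF.2 hae]
      -- find ε > 0 with positive measure of {1 + ε ≤ ρ}
      have hpos : (volume.restrict Ω) {x | 1 < ρ x} ≠ 0 := by
        intro h0
        apply hae
        rw [ae_iff]
        convert h0 using 2
        ext x; simp
      have hsub : {x | 1 < ρ x} ⊆ ⋃ n : ℕ, {x | 1 + ((n : ℝ) + 1)⁻¹ ≤ ρ x} := by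
        intro x hx
        obtain ⟨n, hn⟩ := exists_nat_one_div_lt (K := ℝ) (sub_pos.2 hx)
        refine Set.mem_iUnion.2 ⟨n, ?_⟩
        have : (1 : ℝ) / (n + 1) < ρ x - 1 := hn
        simp only [Set.mem_setOf_eq]
        rw [one_div] at this
        linarith
      obtain ⟨n, hn⟩ : ∃ n : ℕ, (volume.restrict Ω) {x | 1 + ((n : ℝ) + 1)⁻¹ ≤ ρ x} ≠ 0 := by
        by_contra h
        push_neg at h
        exact hpos (measure_mono_null hsub (by rwa [measure_iUnion_null_iff]))
      set ε : ℝ := ((n : ℝ) + 1)⁻¹ with hε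
      have hεpos : 0 < ε := by positivity
      set S : Set (EuclideanSpace ℝ (Fin d)) := {x | 1 + ε ≤ ρ x} with hS
      have hSmeas : MeasurableSet S := measurableSet_le measurable_const hρmeas
      have hSfin : (volume.restrict Ω) S < ⊤ := by
        calc (volume.restrict Ω) S ≤ (volume.restrict Ω) Set.univ := measure_mono (Set.subset_univ _)
        _ = volume Ω := by rw [Measure.restrict_apply_univ]
        _ < ⊤ := hΩfin
      set c : ℝ := ((volume.restrict Ω) S).toReal with hc
      have hcpos : 0 < c := ENNReal.toReal_pos hn hSfin.ne
      have hlow : ∀ m : ℕ, (ENNReal.ofReal (1 + ε)) ^ m * (volume.restrict Ω) S ≤ L m := by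
        intro m
        calc (ENNReal.ofReal (1 + ε)) ^ m * (volume.restrict Ω) S
            = ∫⁻ _ in S, (ENNReal.ofReal (1 + ε)) ^ m ∂(volume.restrict Ω) := by
              rw [setLIntegral_const]
        _ ≤ ∫⁻ x in S, (ENNReal.ofReal (ρ x)) ^ m ∂(volume.restrict Ω) := by
              refine setLIntegral_mono (hρmeas.ennreal_ofReal.pow_const m) (fun x hx => ?_)
              exact pow_le_pow_left' (ENNReal.ofReal_le_ofReal hx) m
        _ ≤ ∫⁻ x, (ENNReal.ofReal (ρ x)) ^ m ∂(volume.restrict Ω) :=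
              setLIntegral_le_lintegral _ _
      have hreal : Tendsto (fun m : ℕ => A + (m : ℝ)⁻¹ * ((1 + ε) ^ m * c)) atTop atTop := by
        have h1 : Tendsto (fun m : ℕ => ((m : ℝ))⁻¹ * (1 + ε) ^ m * c) atTop atTop :=
          (inv_mul_pow_tendsto_atTop (by linarith)).atTop_mul_const hcpos
        have h2 := tendsto_atTop_add_const_left atTop A h1
        refine h2.congr fun m => by ring
      rw [EReal.tendsto_nhds_top_iff_real]
      intro r
      filter_upwards [eventually_ge_atTop 1, hreal.eventually_gt_atTop r] with m hm1 hmr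
      have hFmlow : ((A + (m : ℝ)⁻¹ * ((1 + ε) ^ m * c) : ℝ) : EReal) ≤ Fm m := by
        rw [hFm]
        beta_reduce
        have hrw : (∫⁻ x in Ω, ENNReal.ofReal (ρ x) ^ m) = L m := rfl
        by_cases hLm : L m = ⊤
        · rw [hrw, hLm, EReal.coe_ennreal_top, EReal.coe_mul_top_of_pos
            (by positivity : (0:ℝ) < (m : ℝ)⁻¹), EReal.coe_add_top]
          exact le_top
        · rw [hrw, ereal_coe_ennreal_eq_toReal hLm, ← EReal.coe_mul, ← EReal.coe_add,
            EReal.coe_le_coe_iff]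
          have hub : (1 + ε) ^ m * c ≤ (L m).toReal := by
            have := ENNReal.toReal_mono hLm (hlow m)
            rwa [ENNReal.toReal_mul, ENNReal.toReal_pow,
              ENNReal.toReal_ofReal (by linarith)] at this
          have := mul_le_mul_of_nonneg_left hub (by positivity : (0:ℝ) ≤ (m : ℝ)⁻¹)
          linarith
      exact lt_of_lt_of_le (by exact_mod_cast hmr) hFmlow
  refine ⟨?_, fun _ => key⟩
  rw [key.liminf_eq]
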